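/- Let Ω be a compact subset of [0,∞) with min Ω > 0, and let J be a positive integer. For every continuous function V defined on the union over J' ≤ J of Ω^{J'} that is permutation invariant (i.e., V restricted to each Ω^{J'} is invariant under all permutations of its J' arguments), there exists a continuous function ψ : ℝ^J → ℝ such that for every J' ≤ J and all x₁,…,x_{J'} ∈ Ω, V(x₁,…,x_{J'}) = ψ(∑_{k=1}^{J'} x_k, ∑_{k=1}^{J'} x_k², …, ∑_{k=1}^{J'} x_k^J). -/

import Mathlib

open Finset Topology

lemma msofFn {n : ℕ} {α : Type*} (f : Fin n → α) :
    (Finset.univ.val.map f) = ↑(List.ofFn f) := by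
  simp [List.ofFn_eq_map]

open MvPolynomial in
lemma newton_eval {n : ℕ} (x : Fin n → ℝ) (k : ℕ) :
    (k : ℝ) * ((univ.val.map x).esymm k) =
      (-1)^(k+1) * ∑ a ∈ antidiagonal k with a.1 < k,
        (-1)^a.1 * ((univ.val.map x).esymm a.1) * ∑ i, x i ^ a.2 := by
  have h := congrArg (aeval (R := ℝ) x) (mul_esymm_eq_sum (Fin n) ℝ k)
  simpa [map_sum, map_mul, map_pow, aeval_esymm_eq_multiset_esymm, psum, aeval_X] using h

lemma esymm_eq_of_psum {n : ℕ} (x y : Fin n → ℝ)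
    (h : ∀ q, 1 ≤ q → q ≤ n → ∑ i, x i ^ q = ∑ i, y i ^ q) :
    ∀ k, k ≤ n → (univ.val.map x).esymm k = (univ.val.map y).esymm k := by
  intro k
  induction k using Nat.strong_induction_on with
  | _ k ih =>
    intro hk
    rcases Nat.eq_zero_or_pos k with h0 | h0
    · subst h0; simp [Multiset.esymm]
    · have hx := newton_eval x k
      have hy := newton_eval y k
      have hsum : ∑ a ∈ antidiagonal k with a.1 < k,
            (-1:ℝ)^a.1 * ((univ.val.map x).esymm a.1) * ∑ i, x i ^ a.2
          = ∑ a ∈ antidiagonal k with a.1 < k,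
            (-1:ℝ)^a.1 * ((univ.val.map y).esymm a.1) * ∑ i, y i ^ a.2 := by
        refine Finset.sum_congr rfl ?_
        intro a ha
        rw [Finset.mem_filter, Finset.HasAntidiagonal.mem_antidiagonal] at ha
        have h1 : a.1 < k := ha.2
        have h2 : 1 ≤ a.2 := by omega
        have h3 : a.2 ≤ n := by omega
        rw [ih a.1 h1 (by omega), h a.2 h2 h3]
      have : (k:ℝ) * ((univ.val.map x).esymm k) = (k:ℝ) * ((univ.val.map y).esymm k) := by
        rw [hx, hy, hsum]
      exact mul_left_cancel₀ (by exact_mod_cast h0.ne') this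

lemma multiset_eq_of_psum {n : ℕ} (x y : Fin n → ℝ)
    (h : ∀ q, 1 ≤ q → q ≤ n → ∑ i, x i ^ q = ∑ i, y i ^ q) :
    (univ.val.map x) = (univ.val.map y) := by
  have hcx : Multiset.card (univ.val.map x) = n := by simp
  have hcy : Multiset.card (univ.val.map y) = n := by simp
  have he := esymm_eq_of_psum x y h
  have hpoly : ((univ.val.map x).map fun t => Polynomial.X - Polynomial.C t).prod
      = ((univ.val.map y).map fun t => Polynomial.X - Polynomial.C t).prod := by
    rw [Multiset.prod_X_sub_X_eq_sum_esymm, Multiset.prod_X_sub_X_eq_sum_esymm, hcx, hcy]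
    refine Finset.sum_congr rfl fun j hj => ?_
    rw [he j (Nat.lt_succ_iff.mp (Finset.mem_range.mp hj))]
  have := congrArg Polynomial.roots hpoly
  rwa [Polynomial.roots_multiset_prod_X_sub_C, Polynomial.roots_multiset_prod_X_sub_C] at this

lemma exists_comp_perm {n : ℕ} (x y : Fin n → ℝ)
    (h : (univ.val.map x) = (univ.val.map y)) : ∃ σ : Equiv.Perm (Fin n), x ∘ σ = y := by
  rw [msofFn, msofFn, Multiset.coe_eq_coe] at h
  have h1 : (List.ofFn (x ∘ Tuple.sort x)).Perm (List.ofFn (y ∘ Tuple.sort y)) :=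
    ((Equiv.Perm.ofFn_comp_perm (Tuple.sort x) x).trans h).trans
      (Equiv.Perm.ofFn_comp_perm (Tuple.sort y) y).symm
  have heq : x ∘ Tuple.sort x = y ∘ Tuple.sort y :=
    List.ofFn_injective (List.Perm.eq_of_sortedLE
      (Tuple.monotone_sort x).sortedLE_ofFn (Tuple.monotone_sort y).sortedLE_ofFn h1)
  refine ⟨((Tuple.sort y)⁻¹).trans (Tuple.sort x), funext fun i => ?_⟩
  have := congrFun heq ((Tuple.sort y)⁻¹ i)
  simpa using this

def padf {a J : ℕ} (x : Fin a → ℝ) : Fin J → ℝ :=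
  fun i => if hi : (i:ℕ) < a then x ⟨i, hi⟩ else 0

lemma psum_padf {a J : ℕ} (h : a ≤ J) (x : Fin a → ℝ) {q : ℕ} (hq : 1 ≤ q) :
    ∑ i : Fin J, (padf x i) ^ q = ∑ i : Fin a, x i ^ q := by
  have h1 : ∑ i : Fin J, (padf (J := J) x i) ^ q
      = ∑ i ∈ Finset.range J, (if hi : i < a then x ⟨i, hi⟩ else 0) ^ q :=
    Fin.sum_univ_eq_sum_range (fun m => (if hm : m < a then x ⟨m, hm⟩ else 0) ^ q) J
  have h2 : ∑ i ∈ Finset.range a, (if hi : i < a then x ⟨i, hi⟩ else 0) ^ q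
      = ∑ i : Fin a, x i ^ q := by
    rw [← Fin.sum_univ_eq_sum_range (fun m => (if hm : m < a then x ⟨m, hm⟩ else 0) ^ q) a]
    exact Finset.sum_congr rfl fun i _ => by simp [i.isLt]
  rw [h1, ← h2]
  refine (Finset.sum_subset (Finset.range_subset_range.2 h) fun i _ hi => ?_).symm
  rw [Finset.mem_range, not_lt] at hi
  rw [dif_neg (by omega), zero_pow (by omega)]

lemma ofFn_comp_cast {α : Type*} {m n : ℕ} (e : m = n) (f : Fin n → α) :
    List.ofFn (f ∘ Fin.cast e) = List.ofFn f := by subst e; rfl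

lemma multiset_padf {a J : ℕ} (h : a ≤ J) (x : Fin a → ℝ) :
    (univ.val.map (padf (J := J) x))
      = univ.val.map x + Multiset.replicate (J - a) 0 := by
  have e : J = a + (J - a) := by omega
  have hg : padf (J := J) x = (Fin.append x (fun _ : Fin (J - a) => (0:ℝ))) ∘ Fin.cast e := by
    funext i
    by_cases hi : (i:ℕ) < a
    · have : Fin.cast e i = Fin.castAdd (J - a) ⟨i, hi⟩ := by ext; rfl
      rw [Function.comp_apply, this, Fin.append_left]
      simp [padf, hi]
    · have : Fin.cast e i = Fin.natAdd a ⟨(i:ℕ) - a, by omega⟩ := by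
        ext; simp; omega
      rw [Function.comp_apply, this, Fin.append_right]
      simp [padf, hi]
  rw [msofFn, msofFn, hg, ofFn_comp_cast, List.ofFn_fin_append]
  simp [Multiset.replicate, List.ofFn_const]

lemma key_compare {J a b : ℕ} (ha : a ≤ J) (hb : b ≤ J) (x : Fin a → ℝ) (y : Fin b → ℝ)
    (hx : ∀ i, 0 < x i) (hy : ∀ i, 0 < y i)
    (hps : ∀ q, 1 ≤ q → q ≤ J → ∑ i, x i ^ q = ∑ i, y i ^ q) :
    a = b ∧ (univ.val.map x : Multiset ℝ) = univ.val.map y := by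
  have hpad : ∀ q, 1 ≤ q → q ≤ J →
      ∑ i : Fin J, (padf x i) ^ q = ∑ i : Fin J, (padf y i) ^ q := fun q h1 h2 => by
    rw [psum_padf ha x h1, psum_padf hb y h1, hps q h1 h2]
  have hm := multiset_eq_of_psum _ _ hpad
  rw [multiset_padf ha, multiset_padf hb] at hm
  have hcx : Multiset.count 0 (univ.val.map x) = 0 := Multiset.count_eq_zero.2 (by
    simp only [Multiset.mem_map]
    rintro ⟨i, -, hi⟩
    exact (hx i).ne' hi)
  have hcy : Multiset.count 0 (univ.val.map y) = 0 := Multiset.count_eq_zero.2 (by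
    simp only [Multiset.mem_map]
    rintro ⟨i, -, hi⟩
    exact (hy i).ne' hi)
  have hcount := congrArg (Multiset.count 0) hm
  simp [Multiset.count_add, Multiset.count_replicate] at hcount
  simp [msofFn] at hcx hcy
  have hab : a = b := by omega
  subst hab
  exact ⟨rfl, add_right_cancel hm⟩

abbrev SigT (J : ℕ) (Ω : Set ℝ) := (i : Fin (J+1)) × {x : Fin (i:ℕ) → ℝ // ∀ j, x j ∈ Ω}

/-- variable-size symmetric representation, one-dimensional case. -/
theorem stmt_0 (J : ℕ) (hJ : 0 < J)
    (Ω : Set ℝ) (hΩc : IsCompact Ω)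
    (hΩnn : ∀ x ∈ Ω, 0 ≤ x)
    (m : ℝ) (hmΩ : m ∈ Ω) (hmin : ∀ x ∈ Ω, m ≤ x) (hmpos : 0 < m)
    (V : (J' : ℕ) → (Fin J' → ℝ) → ℝ)
    (hVperm : ∀ J', J' ≤ J → ∀ x : Fin J' → ℝ, (∀ j, x j ∈ Ω) →
      ∀ σ : Equiv.Perm (Fin J'), V J' (x ∘ σ) = V J' x)
    (hVcont : ∀ J', J' ≤ J → ContinuousOn (V J') {x | ∀ j, x j ∈ Ω}) :
    ∃ ψ : (Fin J → ℝ) → ℝ, Continuous ψ ∧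
      ∀ J', J' ≤ J → ∀ x : Fin J' → ℝ, (∀ j, x j ∈ Ω) →
        V J' x = ψ (fun q => ∑ k, x k ^ ((q : ℕ) + 1)) := by
  classical
  have hcomp : ∀ i : ℕ, IsCompact {x : Fin i → ℝ | ∀ j, x j ∈ Ω} := by
    intro i
    convert isCompact_univ_pi (fun _ : Fin i => hΩc) using 1
    ext x; simp [Set.mem_univ_pi]
  haveI : ∀ i : Fin (J+1), CompactSpace {x : Fin (i:ℕ) → ℝ // ∀ j, x j ∈ Ω} :=
    fun i => isCompact_iff_compactSpace.mp (hcomp i)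
  haveI : CompactSpace (SigT J Ω) := by infer_instance
  let F : SigT J Ω → (Fin J → ℝ) := fun t q => ∑ k, t.2.1 k ^ ((q:ℕ)+1)
  have hFcont : Continuous F := by
    apply continuous_sigma
    intro i
    apply continuous_pi
    intro q
    exact continuous_finset_sum (Finset.univ)
      (fun k _ => Continuous.pow ((continuous_apply k).comp continuous_subtype_val) _)
  let W : SigT J Ω → ℝ := fun t => V t.1 t.2.1
  have hWcont : Continuous W := by
    apply continuous_sigma
    intro i
    exact (hVcont i (Fin.is_le i)).restrict
  have hpos : ∀ {n : ℕ} (x : Fin n → ℝ), (∀ j, x j ∈ Ω) → ∀ j, 0 < x j :=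
    fun x hx j => lt_of_lt_of_le hmpos (hmin _ (hx j))
  have compat : ∀ t₁ t₂ : SigT J Ω, F t₁ = F t₂ → W t₁ = W t₂ := by
    rintro ⟨i₁, x₁, hx₁⟩ ⟨i₂, x₂, hx₂⟩ hF
    have hps : ∀ q, 1 ≤ q → q ≤ J → ∑ k, x₁ k ^ q = ∑ k, x₂ k ^ q := by
      intro q h1 h2
      have := congrFun hF ⟨q - 1, by omega⟩
      simpa [F, Nat.sub_add_cancel h1] using this
    obtain ⟨hab, hmeq⟩ := key_compare (Fin.is_le i₁) (Fin.is_le i₂) x₁ x₂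
      (fun j => hpos x₁ hx₁ j) (fun j => hpos x₂ hx₂ j) hps
    have hi : i₁ = i₂ := Fin.ext hab
    subst hi
    obtain ⟨σ, hσ⟩ := exists_comp_perm x₁ x₂ hmeq
    have hperm := hVperm i₁ (Fin.is_le i₁) x₁ hx₁ σ
    rw [hσ] at hperm
    exact hperm.symm
  have hKclosed : IsClosed (Set.range F) := (isCompact_range hFcont).isClosed
  let F' : SigT J Ω → Set.range F := fun t => ⟨F t, Set.mem_range_self t⟩
  have hF'cont : Continuous F' := hFcont.subtype_mk _
  have hF'surj : Function.Surjective F' := by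
    rintro ⟨k, t, ht⟩
    exact ⟨t, Subtype.ext ht⟩
  have qm : IsQuotientMap F' := IsQuotientMap.of_surjective_continuous hF'surj hF'cont
  let g : Set.range F → ℝ := fun k => W (Function.surjInv hF'surj k)
  have hgF : ∀ t, g (F' t) = W t := by
    intro t
    apply compat
    have h := Function.surjInv_eq hF'surj (F' t)
    exact congrArg Subtype.val h
  have hgcont : Continuous g := by
    rw [qm.continuous_iff]
    have : g ∘ F' = W := funext hgF
    rw [this]; exact hWcont
  obtain ⟨ψC, hψC⟩ := ContinuousMap.exists_restrict_eq hKclosed ⟨g, hgcont⟩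
  refine ⟨ψC, ψC.continuous, ?_⟩
  intro J' hJ' x hx
  let t : SigT J Ω := ⟨⟨J', by omega⟩, ⟨x, hx⟩⟩
  have h1 : ψC (F t) = g (F' t) := by
    have := congrFun (congrArg ContinuousMap.toFun hψC) (F' t)
    simpa using this
  calc V J' x = W t := rfl
    _ = g (F' t) := (hgF t).symm
    _ = ψC (F t) := h1.symm
    _ = ψC (fun q => ∑ k, x k ^ ((q:ℕ)+1)) := rfl
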